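/- arXiv:2202.02700 — 2 statements merged into one kernel-verified Lean document; each statement's English description precedes it below -/
import Mathlib

section
/- Let g ⊂ so(V) be a Lie subalgebra, R: g → g self-adjoint with eigenvalues μ₁ ≤ … ≤ μ_{dim g}, and T ∈ ⊗ʳV*_ℂ. Suppose there is C ≥ 1 such that |LT|² ≤ (1/C)|T^g|²|L|² for all L ∈ g. Let 1 ≤ ℓ ≤ ⌊C⌋ be an integer and κ ≤ 0. If μ₁ + … + μ_ℓ + (C − ℓ)μ_{ℓ+1} ≥ κ(ℓ+1), then g(R(T^g), conj(T^g)) ≥ (κ(ℓ+1)/C)|T^g|². -/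
open Finset

/-- Petersen–Wink, Lemma 1.8, inequality form: Let `𝔤 ⊂ 𝔰𝔬(V)` be a Lie
subalgebra (modelled as a real inner product space `G` with orthonormal eigenbasis `b` of
the self-adjoint operator `R`, eigenvalues `μ₁ ≤ … ≤ μ_{dim 𝔤}`), and let `T ∈ ⊗ʳV*_ℂ`
with `A : 𝔤 → W`, `L ↦ L·T` the induced action, so that `|T^𝔤|² = ∑_α |b_α T|²` and
`g(R(T^𝔤), conj(T^𝔤)) = ∑_α μ_α |b_α T|²`.  Suppose there is `C ≥ 1` such that
`|LT|² ≤ (1/C)|T^𝔤|²|L|²` for all `L ∈ 𝔤`.  Let `1 ≤ ℓ ≤ ⌊C⌋` be an integer and `κ ≤ 0`.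
If `μ₁ + … + μ_ℓ + (C − ℓ)μ_{ℓ+1} ≥ κ(ℓ+1)`, then
`g(R(T^𝔤), conj(T^𝔤)) ≥ (κ(ℓ+1)/C)|T^𝔤|²`. -/
theorem stmt_3 {G W : Type*} [NormedAddCommGroup G] [InnerProductSpace ℝ G]
    [NormedAddCommGroup W] [InnerProductSpace ℂ W]
    {N : ℕ} (b : OrthonormalBasis (Fin N) ℝ G)
    (R : G →ₗ[ℝ] G)
    (hself : ∀ x y : G, (inner ℝ (R x) y : ℝ) = inner ℝ x (R y))
    (μ : Fin N → ℝ) (hμmono : Monotone μ)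
    (heig : ∀ α, R (b α) = μ α • b α)
    (A : G →ₗ[ℝ] W)
    (C : ℝ) (hC : 1 ≤ C)
    (hest : ∀ L : G, ‖A L‖ ^ 2 ≤ (1 / C) * (∑ α, ‖A (b α)‖ ^ 2) * ‖L‖ ^ 2)
    (ℓ : ℕ) (hℓ1 : 1 ≤ ℓ) (hℓC : (ℓ : ℝ) ≤ ⌊C⌋₊)
    (hℓN : ℓ < N)
    (κ : ℝ) (hκ : κ ≤ 0)
    (hsum : (∑ α ∈ Finset.univ.filter (fun α : Fin N => (α : ℕ) < ℓ), μ α)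
              + (C - ℓ) * μ ⟨ℓ, hℓN⟩ ≥ κ * (ℓ + 1)) :
    (∑ α, μ α * ‖A (b α)‖ ^ 2) ≥ (κ * (ℓ + 1) / C) * ∑ α, ‖A (b α)‖ ^ 2 := by
  classical
  set f : Fin N → ℝ := fun α => ‖A (b α)‖ ^ 2 with hfdef
  set S : ℝ := ∑ α, f α with hSdef
  have hC0 : (0:ℝ) < C := lt_of_lt_of_le one_pos hC
  have hℓleC : (ℓ:ℝ) ≤ C := hℓC.trans (Nat.floor_le hC0.le)
  have hf0 : ∀ α, 0 ≤ f α := fun α => sq_nonneg _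
  have hS0 : 0 ≤ S := Finset.sum_nonneg fun α _ => hf0 α
  have hSC0 : 0 ≤ S / C := div_nonneg hS0 hC0.le
  have hfb : ∀ α, f α ≤ S / C := by
    intro α
    have h := hest (b α)
    have hb : ‖b α‖ = 1 := b.orthonormal.1 α
    rw [hb] at h
    calc f α ≤ (1 / C) * S * 1 ^ 2 := h
      _ = S / C := by ring
  set M : ℝ := μ ⟨ℓ, hℓN⟩ with hMdef
  set P : Finset (Fin N) := Finset.univ.filter (fun α : Fin N => (α : ℕ) < ℓ) with hPdef
  have hPIio : P = Finset.Iio ⟨ℓ, hℓN⟩ := by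
    ext α
    simp [hPdef, Fin.lt_def]
  have hcardP : P.card = ℓ := by rw [hPIio, Fin.card_Iio]
  have key : ((∑ α ∈ P, μ α) + (C - ℓ) * M) * (S / C) ≤ ∑ α, μ α * f α := by
    have hsplit : ∑ α, μ α * f α = ∑ α ∈ P, μ α * f α + ∑ α ∈ Pᶜ, μ α * f α :=
      (Finset.sum_add_sum_compl P _).symm
    have h1 : ∑ α ∈ P, (μ α * (S / C) + M * (f α - S / C)) ≤ ∑ α ∈ P, μ α * f α := by
      refine Finset.sum_le_sum fun α hα => ?_
      have hαℓ : (α : ℕ) < ℓ := by simpa [hPdef] using hα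
      have hμα : μ α ≤ M := hμmono (by simpa [Fin.le_def] using hαℓ.le)
      nlinarith [hfb α, hf0 α]
    have h2 : ∑ α ∈ Pᶜ, M * f α ≤ ∑ α ∈ Pᶜ, μ α * f α := by
      refine Finset.sum_le_sum fun α hα => ?_
      have hαℓ : ℓ ≤ (α : ℕ) := by
        have := hα
        simp only [hPdef, Finset.mem_compl, Finset.mem_filter, Finset.mem_univ,
          true_and, not_lt] at this
        exact this
      have hμα : M ≤ μ α := hμmono (by simpa [Fin.le_def] using hαℓ)
      nlinarith [hf0 α]
    have hsumP : ∑ α ∈ P, (μ α * (S / C) + M * (f α - S / C))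
        = (∑ α ∈ P, μ α) * (S / C) + M * ((∑ α ∈ P, f α) - ℓ * (S / C)) := by
      rw [Finset.sum_add_distrib, ← Finset.sum_mul, ← Finset.mul_sum,
        Finset.sum_sub_distrib, Finset.sum_const, hcardP, nsmul_eq_mul]
    have hcompl : ∑ α ∈ P, f α + ∑ α ∈ Pᶜ, f α = S := Finset.sum_add_sum_compl P f
    have hsumQ : ∑ α ∈ Pᶜ, M * f α = M * (S - ∑ α ∈ P, f α) := by
      rw [← Finset.mul_sum]
      congr 1
      linarith [hcompl]
    have hCS : S - (ℓ:ℝ) * (S / C) = (C - ℓ) * (S / C) := by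
      field_simp
    have hMS : M * ((∑ α ∈ P, f α) - ℓ * (S / C)) + M * (S - ∑ α ∈ P, f α)
        = (C - ℓ) * M * (S / C) := by
      calc M * ((∑ α ∈ P, f α) - ℓ * (S / C)) + M * (S - ∑ α ∈ P, f α)
          = M * (S - (ℓ:ℝ) * (S / C)) := by ring
        _ = M * ((C - ℓ) * (S / C)) := by rw [hCS]
        _ = (C - ℓ) * M * (S / C) := by ring
    have hexpand : ((∑ α ∈ P, μ α) + (C - ℓ) * M) * (S / C)
        = (∑ α ∈ P, μ α) * (S / C) + (C - ℓ) * M * (S / C) := by ring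
    rw [hsplit, hexpand]
    linarith [h1, h2, hsumP, hsumQ, hMS]
  have hE : κ * (ℓ + 1) * (S / C) ≤ ((∑ α ∈ P, μ α) + (C - ℓ) * M) * (S / C) :=
    mul_le_mul_of_nonneg_right hsum hSC0
  calc (κ * (ℓ + 1) / C) * S = κ * (ℓ + 1) * (S / C) := by ring
    _ ≤ _ := hE.trans key
end

section
/- Under the same hypotheses (|LT|² ≤ (1/C)|T^g|²|L|² for all L ∈ g, C ≥ 1, integer 1 ≤ ℓ ≤ ⌊C⌋), if μ₁ + … + μ_ℓ + (C − ℓ)μ_{ℓ+1} > 0, then g(R(T^g), conj(T^g)) > 0 unless T^g = 0. -/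
open Finset

/-- Petersen–Wink, Lemma 1.8, strict form: Under the same hypotheses as
Statement 3 (`|LT|² ≤ (1/C)|T^𝔤|²|L|²` for all `L ∈ 𝔤`, `C ≥ 1`, integer
`1 ≤ ℓ ≤ ⌊C⌋`), if `μ₁ + … + μ_ℓ + (C − ℓ)μ_{ℓ+1} > 0`, then
`g(R(T^𝔤), conj(T^𝔤)) = ∑_α μ_α |b_α T|² > 0` unless `T^𝔤 = 0`
(i.e. unless `|T^𝔤|² = ∑_α |b_α T|²` vanishes). -/
theorem stmt_4 {G W : Type*} [NormedAddCommGroup G] [InnerProductSpace ℝ G]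
    [NormedAddCommGroup W] [InnerProductSpace ℂ W]
    {N : ℕ} (b : OrthonormalBasis (Fin N) ℝ G)
    (R : G →ₗ[ℝ] G)
    (hself : ∀ x y : G, (inner ℝ (R x) y : ℝ) = inner ℝ x (R y))
    (μ : Fin N → ℝ) (hμmono : Monotone μ)
    (heig : ∀ α, R (b α) = μ α • b α)
    (A : G →ₗ[ℝ] W)
    (C : ℝ) (hC : 1 ≤ C)
    (hest : ∀ L : G, ‖A L‖ ^ 2 ≤ (1 / C) * (∑ α, ‖A (b α)‖ ^ 2) * ‖L‖ ^ 2)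
    (ℓ : ℕ) (hℓ1 : 1 ≤ ℓ) (hℓC : (ℓ : ℝ) ≤ ⌊C⌋₊)
    (hℓN : ℓ < N)
    (hsum : (∑ α ∈ Finset.univ.filter (fun α : Fin N => (α : ℕ) < ℓ), μ α)
              + (C - ℓ) * μ ⟨ℓ, hℓN⟩ > 0)
    (hT : (∑ α, ‖A (b α)‖ ^ 2) ≠ 0) :
    0 < ∑ α, μ α * ‖A (b α)‖ ^ 2 := by
  set a : Fin N → ℝ := fun α => ‖A (b α)‖ ^ 2 with ha
  have hann : ∀ α, 0 ≤ a α := fun α => sq_nonneg _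
  set S : ℝ := ∑ α, a α with hSdef
  have hS : 0 < S := lt_of_le_of_ne (Finset.sum_nonneg fun α _ => hann α) (Ne.symm hT)
  have hCpos : 0 < C := lt_of_lt_of_le one_pos hC
  have hbound : ∀ α, a α ≤ S / C := by
    intro α
    have h := hest (b α)
    have hb : ‖b α‖ = 1 := b.orthonormal.1 α
    rw [hb] at h
    calc a α ≤ (1 / C) * S * 1 ^ 2 := h
      _ = S / C := by ring
  set m : ℝ := μ ⟨ℓ, hℓN⟩ with hm
  set F : Finset (Fin N) := Finset.univ.filter (fun α : Fin N => (α : ℕ) < ℓ) with hF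
  have hcard : (F.card : ℝ) = ℓ := by
    have : F.card = ℓ := by
      have : F = Finset.Iio ⟨ℓ, hℓN⟩ := by
        ext α; simp [hF, Fin.lt_def]
      rw [this]
      simpa using Fin.card_Iio (⟨ℓ, hℓN⟩ : Fin N)
    exact_mod_cast this
  -- key: ∑ (μ α - m) * a α ≥ (S/C) * ∑_{α∈F} (μ α - m)
  have key1 : ∀ α ∈ F, (μ α - m) * (S / C) ≤ (μ α - m) * a α := by
    intro α hα
    have hαℓ : (α : ℕ) < ℓ := by simpa [hF] using hα
    have hμle : μ α ≤ m := hμmono (by simp [Fin.le_def]; omega)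
    exact mul_le_mul_of_nonpos_left (hbound α) (by linarith)
  have key2 : ∀ α ∈ Fᶜ, 0 ≤ (μ α - m) * a α := by
    intro α hα
    have hαℓ : ¬ (α : ℕ) < ℓ := by simpa [hF] using hα
    have hμge : m ≤ μ α := hμmono (by simp [Fin.le_def]; omega)
    exact mul_nonneg (by linarith) (hann α)
  have hsplit : ∑ α, (μ α - m) * a α
      = ∑ α ∈ F, (μ α - m) * a α + ∑ α ∈ Fᶜ, (μ α - m) * a α :=
    (Finset.sum_add_sum_compl F _).symm
  have hge : (S / C) * (∑ α ∈ F, μ α - ℓ * m) ≤ ∑ α, (μ α - m) * a α := by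
    have h1 : ∑ α ∈ F, (μ α - m) * (S / C) ≤ ∑ α ∈ F, (μ α - m) * a α :=
      Finset.sum_le_sum key1
    have h2 : (0:ℝ) ≤ ∑ α ∈ Fᶜ, (μ α - m) * a α := Finset.sum_nonneg key2
    have h3 : ∑ α ∈ F, (μ α - m) * (S / C) = (S / C) * (∑ α ∈ F, μ α - ℓ * m) := by
      rw [← Finset.sum_mul, Finset.sum_sub_distrib, Finset.sum_const, nsmul_eq_mul, hcard]
      ring
    rw [hsplit]; nlinarith [h1, h2, h3]
  have expand : ∑ α, (μ α - m) * a α = (∑ α, μ α * a α) - m * S := by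
    simp [sub_mul, Finset.sum_sub_distrib, Finset.mul_sum, hSdef]
  have final : (S / C) * ((∑ α ∈ F, μ α) + (C - ℓ) * m) ≤ ∑ α, μ α * a α := by
    have hc : (S / C) * (C * m) = m * S := by field_simp
    nlinarith [hge, expand]
  have hpos : 0 < (S / C) * ((∑ α ∈ F, μ α) + (C - ℓ) * m) :=
    mul_pos (div_pos hS hCpos) hsum
  linarith
end
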